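/- arXiv:2311.05009 — 4 statements merged into one kernel-verified Lean document; each statement's English description precedes it below -/
import Mathlib

section
/- Let Γ ⊂ ℝ^M be a compact set equal to the closure of its interior, and let F : ℝ^M → ℝ^M be continuous. For a continuously differentiable function A : ℝ^M → ℝ define the loss L_A(z) = ‖∇A(z) + F(z)‖² and J(A) = sup over all probability densities q on Γ of ∫_Γ L_A(z) q(z) dz. Assume there exists a continuously differentiable A* : ℝ^M → ℝ with ∇A*(z) = −F(z) for all z ∈ Γ. Then a continuously differentiable function Â minimizes J over all continuously differentiable functions (i.e., J(Â) = inf_A J(A)) if and only if ∇Â(z) = −F(z) for all z ∈ Γ. -/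
open MeasureTheory

lemma aux_grad_cont {M : ℕ} (A : EuclideanSpace ℝ (Fin M) → ℝ) (hA : ContDiff ℝ 1 A)
    (F : EuclideanSpace ℝ (Fin M) → EuclideanSpace ℝ (Fin M)) (hF : Continuous F) :
    Continuous (fun z => ‖gradient A z + F z‖ ^ 2) := by
  have h := hA.continuous_fderiv one_ne_zero
  have hg : Continuous (gradient A) :=
    (InnerProductSpace.toDual ℝ _).symm.continuous.comp h
  exact ((hg.add hF).norm).pow 2

/-- minimizers of the sup-over-densities loss functional are exactly the
`C¹` functions whose gradient equals `-F` on `Γ`. -/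
theorem stmt_0 {M : ℕ}
    (Γ : Set (EuclideanSpace ℝ (Fin M)))
    (hΓc : IsCompact Γ) (hΓ : Γ = closure (interior Γ))
    (F : EuclideanSpace ℝ (Fin M) → EuclideanSpace ℝ (Fin M))
    (hF : Continuous F)
    (J : (EuclideanSpace ℝ (Fin M) → ℝ) → ℝ)
    (hJ : ∀ A : EuclideanSpace ℝ (Fin M) → ℝ,
      J A = sSup {r : ℝ | ∃ q : EuclideanSpace ℝ (Fin M) → ℝ,
        Measurable q ∧ (∀ z, 0 ≤ q z) ∧ (∫ z in Γ, q z) = 1 ∧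
        r = ∫ z in Γ, ‖gradient A z + F z‖ ^ 2 * q z})
    (hAstar : ∃ Astar : EuclideanSpace ℝ (Fin M) → ℝ,
      ContDiff ℝ 1 Astar ∧ ∀ z ∈ Γ, gradient Astar z = -F z)
    (Ahat : EuclideanSpace ℝ (Fin M) → ℝ) (hAhat : ContDiff ℝ 1 Ahat) :
    J Ahat = sInf {r : ℝ | ∃ A : EuclideanSpace ℝ (Fin M) → ℝ, ContDiff ℝ 1 A ∧ r = J A}
      ↔ ∀ z ∈ Γ, gradient Ahat z = -F z := by
  obtain ⟨Astar, hAs1, hAs2⟩ := hAstar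
  -- notation for the set of attainable values
  set rset : (EuclideanSpace ℝ (Fin M) → ℝ) → Set ℝ := fun A =>
    {r : ℝ | ∃ q : EuclideanSpace ℝ (Fin M) → ℝ,
      Measurable q ∧ (∀ z, 0 ≤ q z) ∧ (∫ z in Γ, q z) = 1 ∧
      r = ∫ z in Γ, ‖gradient A z + F z‖ ^ 2 * q z} with hrset
  have hJ' : ∀ A, J A = sSup (rset A) := hJ
  -- every element of rset A is nonnegative
  have hnonneg : ∀ A, ∀ r ∈ rset A, 0 ≤ r := by
    rintro A r ⟨q, hqm, hq0, hq1, rfl⟩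
    exact integral_nonneg fun z => mul_nonneg (by positivity) (hq0 z)
  have hJnonneg : ∀ A, 0 ≤ J A := by
    intro A; rw [hJ']; exact Real.sSup_nonneg (hnonneg A)
  by_cases hΓe : Γ = ∅
  · -- degenerate case: no densities exist, all J values are 0
    have hJ0 : ∀ A : EuclideanSpace ℝ (Fin M) → ℝ, J A = 0 := by
      intro A
      rw [hJ']
      have : rset A = ∅ := by
        rw [Set.eq_empty_iff_forall_notMem]
        rintro r ⟨q, hqm, hq0, hq1, rfl⟩
        rw [hΓe] at hq1
        simp at hq1
      rw [this, Real.sSup_empty]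
    have hset : {r : ℝ | ∃ A : EuclideanSpace ℝ (Fin M) → ℝ, ContDiff ℝ 1 A ∧ r = J A} = {0} := by
      ext r
      simp only [Set.mem_setOf_eq, Set.mem_singleton_iff]
      constructor
      · rintro ⟨A, hA, rfl⟩; exact hJ0 A
      · rintro rfl; exact ⟨Astar, hAs1, (hJ0 Astar).symm⟩
    constructor
    · intro _ z hz; rw [hΓe] at hz; exact absurd hz (Set.notMem_empty z)
    · intro _; rw [hset, csInf_singleton, hJ0]
  · -- main case: Γ nonempty
    have hΓne : Γ.Nonempty := Set.nonempty_iff_ne_empty.2 hΓe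
    have hΓmeas : MeasurableSet Γ := hΓc.isClosed.measurableSet
    have hμlt : volume Γ < ⊤ := hΓc.measure_lt_top
    have hintne : (interior Γ).Nonempty := by
      by_contra h
      rw [Set.not_nonempty_iff_eq_empty] at h
      rw [hΓ, h, closure_empty] at hΓne
      exact hΓe (by rw [hΓ, h, closure_empty])
    have hμpos : 0 < volume Γ :=
      lt_of_lt_of_le (isOpen_interior.measure_pos volume hintne)
        (measure_mono interior_subset)
    have hμne : (volume Γ).toReal ≠ 0 :=
      (ENNReal.toReal_pos hμpos.ne' hμlt.ne).ne'
    -- the constant density shows rset A is nonempty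
    have hne : ∀ A : EuclideanSpace ℝ (Fin M) → ℝ, (rset A).Nonempty := by
      intro A
      refine ⟨_, fun _ => (volume Γ).toReal⁻¹, measurable_const,
        fun _ => by positivity, ?_, rfl⟩
      rw [setIntegral_const, smul_eq_mul, measureReal_def, mul_inv_cancel₀ hμne]
    -- every rset A for C¹ A is bounded above
    have hbdd : ∀ A : EuclideanSpace ℝ (Fin M) → ℝ, ContDiff ℝ 1 A → BddAbove (rset A) := by
      intro A hA
      have hgc : Continuous (fun z => ‖gradient A z + F z‖ ^ 2) :=
        aux_grad_cont A hA F hF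
      obtain ⟨z₀, hz₀, hmax⟩ := hΓc.exists_isMaxOn hΓne hgc.continuousOn
      set C := ‖gradient A z₀ + F z₀‖ ^ 2 with hC
      refine ⟨C, ?_⟩
      rintro r ⟨q, hqm, hq0, hq1, rfl⟩
      have hqint : IntegrableOn q Γ := by
        by_contra h
        rw [integral_undef h] at hq1
        norm_num at hq1
      have hCq : IntegrableOn (fun z => C * q z) Γ := hqint.const_mul C
      have hgqint : IntegrableOn (fun z => ‖gradient A z + F z‖ ^ 2 * q z) Γ := by
        refine hCq.mono' ((hgc.aestronglyMeasurable.mul hqm.aestronglyMeasurable).restrict) ?_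
        filter_upwards [ae_restrict_mem hΓmeas] with z hz
        rw [Real.norm_eq_abs, abs_of_nonneg (mul_nonneg (by positivity) (hq0 z))]
        exact mul_le_mul_of_nonneg_right (hmax hz) (hq0 z)
      calc (∫ z in Γ, ‖gradient A z + F z‖ ^ 2 * q z)
          ≤ ∫ z in Γ, C * q z := by
            refine setIntegral_mono_on hgqint hCq hΓmeas fun z hz =>
              mul_le_mul_of_nonneg_right (hmax hz) (hq0 z)
        _ = C * ∫ z in Γ, q z := integral_const_mul C q
        _ = C := by rw [hq1, mul_one]
    -- if the gradient condition holds, J A = 0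
    have hJzero : ∀ A : EuclideanSpace ℝ (Fin M) → ℝ, (∀ z ∈ Γ, gradient A z = -F z) → J A = 0 := by
      intro A hA
      rw [hJ']
      refine le_antisymm (csSup_le (hne A) ?_) (Real.sSup_nonneg (hnonneg A))
      rintro r ⟨q, hqm, hq0, hq1, rfl⟩
      rw [show (∫ z in Γ, ‖gradient A z + F z‖ ^ 2 * q z) = ∫ z in Γ, (0:ℝ) from
        setIntegral_congr_fun hΓmeas fun z hz => by simp [hA z hz], integral_zero]
    -- the infimum is 0
    have hinf : sInf {r : ℝ | ∃ A : EuclideanSpace ℝ (Fin M) → ℝ, ContDiff ℝ 1 A ∧ r = J A} = 0 := by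
      refine le_antisymm (csInf_le ⟨0, ?_⟩ ⟨Astar, hAs1, (hJzero Astar hAs2).symm⟩) ?_
      · rintro r ⟨A, hA, rfl⟩; exact hJnonneg A
      · refine le_csInf ⟨J Astar, Astar, hAs1, rfl⟩ ?_
        rintro r ⟨A, hA, rfl⟩; exact hJnonneg A
    rw [hinf]
    constructor
    · -- J Ahat = 0 → gradient condition
      intro hJ0 z₀ hz₀
      by_contra hne0
      have hgc : Continuous (fun z => ‖gradient Ahat z + F z‖ ^ 2) :=
        aux_grad_cont Ahat hAhat F hF
      set g : EuclideanSpace ℝ (Fin M) → ℝ := fun z => ‖gradient Ahat z + F z‖ ^ 2 with hg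
      have hc : 0 < g z₀ := by
        have hne' : gradient Ahat z₀ + F z₀ ≠ 0 := fun h =>
          hne0 (eq_neg_of_add_eq_zero_left h)
        have := norm_pos_iff.2 hne'
        rw [hg]
        positivity
      set c := g z₀ with hcdef
      have hU : IsOpen {z | c / 2 < g z} := isOpen_lt continuous_const hgc
      have hz₀U : z₀ ∈ {z | c / 2 < g z} := by
        simp only [Set.mem_setOf_eq]; linarith
      -- z₀ ∈ closure (interior Γ), so the open set meets interior Γ
      have hz₀cl : z₀ ∈ closure (interior Γ) := hΓ ▸ hz₀
      obtain ⟨z₁, hz₁U, hz₁int⟩ :=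
        (mem_closure_iff.1 hz₀cl) _ hU hz₀U
      set V := {z | c / 2 < g z} ∩ interior Γ with hV
      have hVopen : IsOpen V := hU.inter isOpen_interior
      have hVne : V.Nonempty := ⟨z₁, hz₁U, hz₁int⟩
      have hVsub : V ⊆ Γ := fun z hz => interior_subset hz.2
      have hVmeas : MeasurableSet V := hVopen.measurableSet
      have hμVpos : 0 < volume V := hVopen.measure_pos volume hVne
      have hμVlt : volume V < ⊤ := lt_of_le_of_lt (measure_mono hVsub) hμlt
      have hμVne : (volume V).toReal ≠ 0 :=
        (ENNReal.toReal_pos hμVpos.ne' hμVlt.ne).ne'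
      set q : EuclideanSpace ℝ (Fin M) → ℝ := V.indicator (fun _ => (volume V).toReal⁻¹) with hq
      have hqm : Measurable q := measurable_const.indicator hVmeas
      have hq0 : ∀ z, 0 ≤ q z := fun z =>
        Set.indicator_nonneg (fun _ _ => by positivity) z
      have hq1 : (∫ z in Γ, q z) = 1 := by
        rw [hq, setIntegral_indicator hVmeas,
          Set.inter_eq_self_of_subset_right hVsub, setIntegral_const, smul_eq_mul,
          measureReal_def, mul_inv_cancel₀ hμVne]
      have hgint : IntegrableOn g V :=
        (hgc.continuousOn.integrableOn_compact hΓc).mono_set hVsub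
      have hkey : (∫ z in Γ, g z * q z) = (∫ z in V, g z) * (volume V).toReal⁻¹ := by
        have heq : (fun z => g z * q z) =
            V.indicator (fun z => g z * (volume V).toReal⁻¹) := by
          funext z
          by_cases hz : z ∈ V
          · rw [Set.indicator_of_mem hz, hq, Set.indicator_of_mem hz]
          · rw [Set.indicator_of_notMem hz, hq, Set.indicator_of_notMem hz, mul_zero]
        rw [heq, setIntegral_indicator hVmeas,
          Set.inter_eq_self_of_subset_right hVsub, integral_mul_const]
      have hlow : c / 2 * (volume V).toReal ≤ ∫ z in V, g z :=
        setIntegral_ge_of_const_le_real hVmeas hμVlt.ne (fun z hz => le_of_lt hz.1) hgint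
      have hrge : c / 2 ≤ ∫ z in Γ, g z * q z := by
        rw [hkey]
        calc c / 2 = (c / 2 * (volume V).toReal) * (volume V).toReal⁻¹ := by
              field_simp
          _ ≤ (∫ z in V, g z) * (volume V).toReal⁻¹ := by
              apply mul_le_mul_of_nonneg_right hlow
              positivity
      have hmem : (∫ z in Γ, g z * q z) ∈ rset Ahat := ⟨q, hqm, hq0, hq1, rfl⟩
      have := le_csSup (hbdd Ahat hAhat) hmem
      rw [← hJ', hJ0] at this
      linarith
    · intro h
      exact hJzero Ahat h
end

section
/- Let ρ be a compactly supported Borel probability measure on ℝ^M and let f : ℝ^M → ℝ be continuous. Suppose z* ∈ supp(ρ) is the unique minimizer of f on supp(ρ), i.e., f(z*) < f(z) for every z ∈ supp(ρ) with z ≠ z*. Then the reweighted mean converges to the minimizer: lim_{κ → ∞} ( ∫_{ℝ^M} z·exp(−κ f(z)) ρ(dz) ) / ( ∫_{ℝ^M} exp(−κ f(z)) ρ(dz) ) = z*. -/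
open MeasureTheory Filter

/-- The topological support of a Borel measure: the set of points all of whose open
neighborhoods have positive measure (equivalently, the smallest closed set of full
measure). -/
def measureSupport {E : Type*} [TopologicalSpace E] [MeasurableSpace E]
    (ρ : Measure E) : Set E :=
  {x | ∀ U : Set E, IsOpen U → x ∈ U → 0 < ρ U}

set_option maxHeartbeats 1000000 in
/-- as `κ → ∞`, the `exp(-κ f)`-reweighted mean of a compactly supported
probability measure `ρ` converges to the unique minimizer `z*` of `f` on `supp ρ`. -/
theorem stmt_4 {M : ℕ}
    (ρ : Measure (EuclideanSpace ℝ (Fin M))) [IsProbabilityMeasure ρ]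
    (hρsupp : IsCompact (measureSupport ρ))
    (f : EuclideanSpace ℝ (Fin M) → ℝ) (hf : Continuous f)
    (zstar : EuclideanSpace ℝ (Fin M)) (hz : zstar ∈ measureSupport ρ)
    (hmin : ∀ z ∈ measureSupport ρ, z ≠ zstar → f zstar < f z) :
    Tendsto (fun κ : ℝ =>
        (∫ z, Real.exp (-κ * f z) ∂ρ)⁻¹ • (∫ z, Real.exp (-κ * f z) • z ∂ρ))
      atTop (nhds zstar) := by
  classical
  set c : ℝ := f zstar with hc
  set g : EuclideanSpace ℝ (Fin M) → ℝ := fun z => f z - c with hg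
  have hgcont : Continuous g := hf.sub continuous_const
  set S : Set (EuclideanSpace ℝ (Fin M)) := measureSupport ρ with hSdef
  -- S is closed
  have hSc : IsClosed S := by
    rw [← isOpen_compl_iff, isOpen_iff_mem_nhds]
    intro x hx
    simp only [hSdef, measureSupport, Set.mem_compl_iff, Set.mem_setOf_eq] at hx
    push_neg at hx
    obtain ⟨U, hUo, hxU, hU⟩ := hx
    refine Filter.mem_of_superset (hUo.mem_nhds hxU) fun y hyU hyS => ?_
    have : 0 < ρ U := hyS U hUo hyU
    exact absurd this (not_lt.mpr hU)
  -- complement of S is null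
  have hS0 : ρ Sᶜ = 0 := by
    apply measure_null_of_locally_null
    intro x hx
    simp only [hSdef, measureSupport, Set.mem_compl_iff, Set.mem_setOf_eq] at hx
    push_neg at hx
    obtain ⟨U, hUo, hxU, hU⟩ := hx
    exact ⟨U, mem_nhdsWithin_of_mem_nhds (hUo.mem_nhds hxU), le_antisymm hU zero_le⟩
  have haeS : ∀ᵐ z ∂ρ, z ∈ S := by
    rw [ae_iff]
    exact measure_mono_null (fun z hz => hz) hS0
  have hgz : g zstar = 0 := sub_self c
  have hgS : ∀ z ∈ S, 0 ≤ g z := by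
    intro z hzS
    rcases eq_or_ne z zstar with rfl | hne
    · exact hgz.symm.le
    · exact le_of_lt (sub_pos.mpr (hmin z hzS hne))
  -- bound on the support
  obtain ⟨C, hC⟩ := isBounded_iff_forall_norm_le.mp hρsupp.isBounded
  set R : ℝ := C + ‖zstar‖ with hR
  have hR0 : 0 ≤ R := by
    have h1 := hC zstar hz
    have h2 := norm_nonneg zstar
    linarith
  have hRz : ∀ z ∈ S, ‖z - zstar‖ ≤ R :=
    fun z hzS => (norm_sub_le _ _).trans (add_le_add (hC z hzS) le_rfl)
  -- integrability facts
  have hexple : ∀ (κ : ℝ), 0 ≤ κ → ∀ z ∈ S, Real.exp (-κ * g z) ≤ 1 := by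
    intro κ hκ z hzS
    rw [Real.exp_le_one_iff]
    have := hgS z hzS
    nlinarith
  have hmeas1 : ∀ κ : ℝ, AEStronglyMeasurable (fun z => Real.exp (-κ * g z)) ρ :=
    fun κ => (Real.continuous_exp.comp (continuous_const.mul hgcont)).aestronglyMeasurable
  have hint1 : ∀ κ : ℝ, 0 ≤ κ → Integrable (fun z => Real.exp (-κ * g z)) ρ := by
    intro κ hκ
    refine Integrable.mono' (integrable_const 1) (hmeas1 κ) ?_
    filter_upwards [haeS] with z hzS
    rw [Real.norm_of_nonneg (Real.exp_nonneg _)]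
    exact hexple κ hκ z hzS
  have hint2 : ∀ κ : ℝ, 0 ≤ κ →
      Integrable (fun z => Real.exp (-κ * g z) • (z - zstar)) ρ := by
    intro κ hκ
    refine Integrable.mono' (integrable_const R) ?_ ?_
    · exact ((Real.continuous_exp.comp (continuous_const.mul hgcont)).smul
        (continuous_id.sub continuous_const)).aestronglyMeasurable
    · filter_upwards [haeS] with z hzS
      rw [norm_smul, Real.norm_of_nonneg (Real.exp_nonneg _)]
      have h1 := hexple κ hκ z hzS
      have h2 := hRz z hzS
      nlinarith [Real.exp_nonneg (-κ * g z), norm_nonneg (z - zstar)]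
  have hint3 : ∀ κ : ℝ, 0 ≤ κ →
      Integrable (fun z => Real.exp (-κ * g z) * ‖z - zstar‖) ρ := by
    intro κ hκ
    refine ((hint2 κ hκ).norm).congr (Filter.Eventually.of_forall fun z => ?_)
    simp [norm_smul, Real.abs_exp]
  have hint4 : ∀ κ : ℝ, 0 ≤ κ → Integrable (fun z => Real.exp (-κ * g z) • z) ρ := by
    intro κ hκ
    refine ((hint2 κ hκ).add ((hint1 κ hκ).smul_const zstar)).congr
      (Filter.Eventually.of_forall fun z => ?_)
    simp only [Pi.add_apply, smul_sub]
    abel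
  set D : ℝ → ℝ := fun κ => ∫ z, Real.exp (-κ * g z) ∂ρ with hD
  set N : ℝ → EuclideanSpace ℝ (Fin M) := fun κ => ∫ z, Real.exp (-κ * g z) • z ∂ρ with hN
  -- reduction from f to g
  have hexpr : ∀ κ : ℝ,
      (D κ)⁻¹ • N κ =
      (∫ z, Real.exp (-κ * f z) ∂ρ)⁻¹ • (∫ z, Real.exp (-κ * f z) • z ∂ρ) := by
    intro κ
    have hsplit : ∀ z, Real.exp (-κ * f z) = Real.exp (-κ * c) * Real.exp (-κ * g z) := by
      intro z
      rw [← Real.exp_add]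
      congr 1
      simp only [hg]
      ring
    have h1 : (∫ z, Real.exp (-κ * f z) ∂ρ) = Real.exp (-κ * c) * D κ :=
      (integral_congr_ae (Filter.Eventually.of_forall hsplit)).trans
        (integral_const_mul _ _)
    have h2 : (∫ z, Real.exp (-κ * f z) • z ∂ρ) = Real.exp (-κ * c) • N κ := by
      have hsplit2 : (fun z => Real.exp (-κ * f z) • z) =ᵐ[ρ]
          fun z => Real.exp (-κ * c) • (Real.exp (-κ * g z) • z) :=
        Filter.Eventually.of_forall fun z => by
          show Real.exp (-κ * f z) • z = Real.exp (-κ * c) • Real.exp (-κ * g z) • z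
          rw [hsplit z, mul_smul]
      exact (integral_congr_ae hsplit2).trans (integral_smul _ _)
    rw [h1, h2, smul_smul]
    congr 1
    rw [mul_inv, mul_right_comm, inv_mul_cancel₀ (Real.exp_ne_zero _), one_mul]
  refine Tendsto.congr hexpr ?_
  -- main argument
  rw [Metric.tendsto_nhds]
  intro ε hε
  -- far set and positive gap δ
  set F : Set (EuclideanSpace ℝ (Fin M)) := S ∩ (Metric.ball zstar (ε / 2))ᶜ with hF
  have hFcompact : IsCompact F := hρsupp.inter_right Metric.isOpen_ball.isClosed_compl
  have hFmeas : MeasurableSet F := hSc.measurableSet.inter measurableSet_ball.compl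
  obtain ⟨δ, hδ0, hδF⟩ : ∃ δ : ℝ, 0 < δ ∧ ∀ z ∈ F, δ ≤ g z := by
    rcases F.eq_empty_or_nonempty with hFe | hFne
    · exact ⟨1, one_pos, by simp [hFe]⟩
    · obtain ⟨z₀, hz₀F, hz₀min⟩ := hFcompact.exists_isMinOn hFne hgcont.continuousOn
      refine ⟨g z₀, ?_, fun z hzF => hz₀min hzF⟩
      have hz₀S : z₀ ∈ S := hz₀F.1
      have hz₀ne : z₀ ≠ zstar := by
        intro h
        apply hz₀F.2
        rw [h]
        exact Metric.mem_ball_self (by linarith)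
      exact sub_pos.mpr (hmin z₀ hz₀S hz₀ne)
  -- small ball around zstar where g < δ/2
  obtain ⟨r, hr0, hrball⟩ : ∃ r > 0, Metric.ball zstar r ⊆ {z | g z < δ / 2} := by
    have hopen : IsOpen {z | g z < δ / 2} := isOpen_lt hgcont continuous_const
    have hmem : zstar ∈ {z | g z < δ / 2} := by
      simp only [Set.mem_setOf_eq, hgz]
      linarith
    exact Metric.isOpen_iff.mp hopen zstar hmem
  set ρB : ℝ := (ρ (Metric.ball zstar r)).toReal with hρB
  have hρB0 : 0 < ρB := by
    apply ENNReal.toReal_pos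
    · exact (hz _ Metric.isOpen_ball (Metric.mem_ball_self hr0)).ne'
    · exact (measure_lt_top ρ _).ne
  -- lower bound on D
  have hDlow : ∀ κ : ℝ, 0 ≤ κ → Real.exp (-κ * (δ / 2)) * ρB ≤ D κ := by
    intro κ hκ
    have h1 : ∫ _ in Metric.ball zstar r, Real.exp (-κ * (δ / 2)) ∂ρ ≤
        ∫ z in Metric.ball zstar r, Real.exp (-κ * g z) ∂ρ := by
      refine setIntegral_mono_on (integrableOn_const (measure_lt_top ρ _).ne)
        ((hint1 κ hκ).integrableOn) measurableSet_ball ?_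
      intro z hzball
      have hgzlt : g z < δ / 2 := hrball hzball
      exact Real.exp_le_exp.mpr (by nlinarith)
    have h2 : ∫ _ in Metric.ball zstar r, Real.exp (-κ * (δ / 2)) ∂ρ =
        ρB * Real.exp (-κ * (δ / 2)) := by
      rw [setIntegral_const, smul_eq_mul, measureReal_def]
    have h3 : ∫ z in Metric.ball zstar r, Real.exp (-κ * g z) ∂ρ ≤ D κ :=
      setIntegral_le_integral (hint1 κ hκ)
        (Filter.Eventually.of_forall fun z => Real.exp_nonneg _)
    rw [mul_comm]
    linarith
  -- upper bound on the numerator deviation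
  have hNbound : ∀ κ : ℝ, 0 ≤ κ →
      ‖N κ - D κ • zstar‖ ≤ (ε / 2) * D κ + R * Real.exp (-κ * δ) := by
    intro κ hκ
    have hNd : N κ - D κ • zstar = ∫ z, Real.exp (-κ * g z) • (z - zstar) ∂ρ := by
      simp only [hN, hD]
      rw [← integral_smul_const, ← integral_sub (hint4 κ hκ) ((hint1 κ hκ).smul_const zstar)]
      congr 1
      funext z
      rw [smul_sub]
    rw [hNd]
    have hnorm : ‖∫ z, Real.exp (-κ * g z) • (z - zstar) ∂ρ‖ ≤
        ∫ z, Real.exp (-κ * g z) * ‖z - zstar‖ ∂ρ := by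
      refine (norm_integral_le_integral_norm _).trans (le_of_eq ?_)
      congr 1
      funext z
      rw [norm_smul, Real.norm_of_nonneg (Real.exp_nonneg _)]
    have hsplit2 : ∫ z, Real.exp (-κ * g z) * ‖z - zstar‖ ∂ρ =
        (∫ z in Metric.ball zstar (ε / 2), Real.exp (-κ * g z) * ‖z - zstar‖ ∂ρ) +
        ∫ z in (Metric.ball zstar (ε / 2))ᶜ, Real.exp (-κ * g z) * ‖z - zstar‖ ∂ρ :=
      (integral_add_compl measurableSet_ball (hint3 κ hκ)).symm
    have hnear : ∫ z in Metric.ball zstar (ε / 2), Real.exp (-κ * g z) * ‖z - zstar‖ ∂ρ ≤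
        (ε / 2) * D κ := by
      have b1 : ∫ z in Metric.ball zstar (ε / 2), Real.exp (-κ * g z) * ‖z - zstar‖ ∂ρ ≤
          ∫ z in Metric.ball zstar (ε / 2), (ε / 2) * Real.exp (-κ * g z) ∂ρ := by
        refine setIntegral_mono_on ((hint3 κ hκ).integrableOn)
          (((hint1 κ hκ).const_mul (ε / 2)).integrableOn) measurableSet_ball ?_
        intro z hzball
        have hd : ‖z - zstar‖ < ε / 2 := by
          rw [← dist_eq_norm]
          exact Metric.mem_ball.mp hzball
        nlinarith [Real.exp_nonneg (-κ * g z), norm_nonneg (z - zstar)]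
      have b2 : ∫ z in Metric.ball zstar (ε / 2), (ε / 2) * Real.exp (-κ * g z) ∂ρ =
          (ε / 2) * ∫ z in Metric.ball zstar (ε / 2), Real.exp (-κ * g z) ∂ρ :=
        integral_const_mul _ _
      have b3 : ∫ z in Metric.ball zstar (ε / 2), Real.exp (-κ * g z) ∂ρ ≤ D κ :=
        setIntegral_le_integral (hint1 κ hκ)
          (Filter.Eventually.of_forall fun z => Real.exp_nonneg _)
      rw [b2] at b1
      nlinarith
    have hfar : ∫ z in (Metric.ball zstar (ε / 2))ᶜ, Real.exp (-κ * g z) * ‖z - zstar‖ ∂ρ ≤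
        R * Real.exp (-κ * δ) := by
      have hsets : ((Metric.ball zstar (ε / 2))ᶜ : Set (EuclideanSpace ℝ (Fin M))) =ᵐ[ρ] F := by
        refine eventuallyEq_set.mpr ?_
        filter_upwards [haeS] with z hzS
        constructor
        · intro hzc
          exact ⟨hzS, hzc⟩
        · intro hzF
          exact hzF.2
      rw [setIntegral_congr_set hsets]
      have b1 : ∫ z in F, Real.exp (-κ * g z) * ‖z - zstar‖ ∂ρ ≤
          ∫ _ in F, Real.exp (-κ * δ) * R ∂ρ := by
        refine setIntegral_mono_on ((hint3 κ hκ).integrableOn)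
          (integrableOn_const (measure_lt_top ρ _).ne) hFmeas ?_
        intro z hzF
        have h1 : Real.exp (-κ * g z) ≤ Real.exp (-κ * δ) := by
          refine Real.exp_le_exp.mpr ?_
          have := hδF z hzF
          nlinarith
        have h2 : ‖z - zstar‖ ≤ R := hRz z hzF.1
        nlinarith [Real.exp_nonneg (-κ * g z), Real.exp_nonneg (-κ * δ),
          norm_nonneg (z - zstar)]
      have b2 : ∫ _ in F, Real.exp (-κ * δ) * R ∂ρ = (ρ F).toReal * (Real.exp (-κ * δ) * R) := by
        rw [setIntegral_const, smul_eq_mul, measureReal_def]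
      have b3 : (ρ F).toReal ≤ 1 := by
        refine ENNReal.toReal_le_of_le_ofReal one_pos.le ?_
        rw [ENNReal.ofReal_one]
        exact prob_le_one
      have b4 : 0 ≤ Real.exp (-κ * δ) * R := mul_nonneg (Real.exp_nonneg _) hR0
      rw [b2] at b1
      calc ∫ z in F, Real.exp (-κ * g z) * ‖z - zstar‖ ∂ρ
          ≤ (ρ F).toReal * (Real.exp (-κ * δ) * R) := b1
        _ ≤ 1 * (Real.exp (-κ * δ) * R) := mul_le_mul_of_nonneg_right b3 b4
        _ = R * Real.exp (-κ * δ) := by ring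
    calc ‖∫ z, Real.exp (-κ * g z) • (z - zstar) ∂ρ‖
        ≤ ∫ z, Real.exp (-κ * g z) * ‖z - zstar‖ ∂ρ := hnorm
      _ = _ := hsplit2
      _ ≤ (ε / 2) * D κ + R * Real.exp (-κ * δ) := add_le_add hnear hfar
  -- the error term tends to 0
  have htend : Tendsto (fun κ : ℝ => (R / ρB) * Real.exp (-κ * (δ / 2))) atTop (nhds 0) := by
    have h1 : Tendsto (fun κ : ℝ => -κ * (δ / 2)) atTop atBot := by
      have h0 : Tendsto (fun κ : ℝ => κ * (δ / 2)) atTop atTop :=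
        Tendsto.atTop_mul_const (by linarith) tendsto_id
      refine (tendsto_neg_atTop_atBot.comp h0).congr fun κ => ?_
      simp only [Function.comp]
      ring
    have h2 := Real.tendsto_exp_atBot.comp h1
    have h3 := h2.const_mul (R / ρB)
    simpa using h3
  filter_upwards [htend.eventually (gt_mem_nhds (by linarith : (0 : ℝ) < ε / 2)),
    eventually_ge_atTop (0 : ℝ)] with κ hκb hκ0
  rw [dist_eq_norm]
  have hD0 : 0 < D κ :=
    lt_of_lt_of_le (by positivity) (hDlow κ hκ0)
  have key : (D κ)⁻¹ • N κ - zstar = (D κ)⁻¹ • (N κ - D κ • zstar) := by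
    rw [smul_sub, smul_smul, inv_mul_cancel₀ hD0.ne', one_smul]
  rw [key, norm_smul, Real.norm_of_nonneg (inv_nonneg.mpr hD0.le)]
  set b : ℝ := (R / ρB) * Real.exp (-κ * (δ / 2)) with hb
  have h2 : R * Real.exp (-κ * δ) ≤ b * D κ := by
    have hd := hDlow κ hκ0
    have hexpeq : Real.exp (-κ * δ) = Real.exp (-κ * (δ / 2)) * Real.exp (-κ * (δ / 2)) := by
      rw [← Real.exp_add]
      congr 1
      ring
    have hb0 : 0 ≤ b := by positivity
    calc R * Real.exp (-κ * δ) = b * (Real.exp (-κ * (δ / 2)) * ρB) := by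
          rw [hb, hexpeq]
          field_simp
      _ ≤ b * D κ := mul_le_mul_of_nonneg_left hd hb0
  have h3 : ‖N κ - D κ • zstar‖ ≤ (ε / 2 + b) * D κ := by
    calc ‖N κ - D κ • zstar‖ ≤ (ε / 2) * D κ + R * Real.exp (-κ * δ) := hNbound κ hκ0
      _ ≤ (ε / 2) * D κ + b * D κ := add_le_add le_rfl h2
      _ = (ε / 2 + b) * D κ := by ring
  calc (D κ)⁻¹ * ‖N κ - D κ • zstar‖
      ≤ (D κ)⁻¹ * ((ε / 2 + b) * D κ) :=
        mul_le_mul_of_nonneg_left h3 (inv_nonneg.mpr hD0.le)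
    _ = ε / 2 + b := by field_simp
    _ < ε := by linarith
end

section
/- Let Σ ∈ ℝ^{M×M} be symmetric positive definite, let μ ∈ ℝ^M, let κ_l, κ_h > 0, and set κ_t = κ_l + κ_h. Then the pair (m, V) = (μ, Σ) is the unique pair, with V ranging over symmetric positive definite matrices and m over ℝ^M, satisfying the fixed-point equations V = κ_t (κ_h V⁻¹ + κ_l Σ⁻¹)⁻¹ and m = (κ_h V⁻¹ + κ_l Σ⁻¹)⁻¹ (κ_l Σ⁻¹ μ + κ_h V⁻¹ m). Consequently, the self-consistent stationary Gaussian distribution of the consensus-based sampling dynamics has mean μ and covariance κ_h⁻¹ Σ, i.e., its density is proportional to exp(−κ_h L(z)) for the quadratic loss L(z) = ½ (z−μ)ᵀ Σ⁻¹ (z−μ). -/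
open Matrix

private lemma posDef_smul {n : ℕ} {A : Matrix (Fin n) (Fin n) ℝ} (hA : A.PosDef)
    {c : ℝ} (hc : 0 < c) : (c • A).PosDef := by
  exact hA.smul hc

private lemma posDef_add {n : ℕ} {A B : Matrix (Fin n) (Fin n) ℝ}
    (hA : A.PosDef) (hB : B.PosDef) : (A + B).PosDef := by
  exact hA.add hB

/-- `(m, V) = (μ, Σ)` is the unique fixed point (with `V` symmetric
positive definite) of the consensus-based sampling moment equations with
`κ_t = κ_l + κ_h`; consequently the self-consistent stationary Gaussian has mean `μ`
and covariance `κ_h⁻¹ Σ`, i.e., density proportional to `exp(-κ_h L(z))` for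
`L(z) = ½ (z-μ)ᵀ Σ⁻¹ (z-μ)`. -/
theorem stmt_9 {M : ℕ}
    (S : Matrix (Fin M) (Fin M) ℝ) (hS : S.PosDef) (μ : Fin M → ℝ)
    (κl κh κt : ℝ) (hκl : 0 < κl) (hκh : 0 < κh) (hκt : κt = κl + κh) :
    (∀ (m : Fin M → ℝ) (V : Matrix (Fin M) (Fin M) ℝ), V.PosDef →
      ((V = κt • (κh • V⁻¹ + κl • S⁻¹)⁻¹ ∧
        m = (κh • V⁻¹ + κl • S⁻¹)⁻¹ *ᵥ (κl • (S⁻¹ *ᵥ μ) + κh • (V⁻¹ *ᵥ m))) ↔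
        (m = μ ∧ V = S))) ∧
    (∃ c : ℝ, 0 < c ∧ ∀ z : Fin M → ℝ,
      Real.exp (-(1 / 2) * ((z - μ) ⬝ᵥ ((κh⁻¹ • S)⁻¹ *ᵥ (z - μ)))) =
        c * Real.exp (-κh * (1 / 2 * ((z - μ) ⬝ᵥ (S⁻¹ *ᵥ (z - μ)))))) := by
  have hκt0 : 0 < κt := by rw [hκt]; positivity
  haveI : Invertible κt := invertibleOfNonzero hκt0.ne'
  have hSu : IsUnit S.det := hS.det_pos.ne'.isUnit
  have hSinv : S⁻¹.PosDef := hS.inv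
  have hSinvu : IsUnit S⁻¹.det := hSinv.det_pos.ne'.isUnit
  -- the constant matrix at the fixed point
  have hsum : κh • S⁻¹ + κl • S⁻¹ = κt • S⁻¹ := by
    rw [← add_smul, hκt, add_comm]
  have hinv_sum : (κt • S⁻¹)⁻¹ = κt⁻¹ • S := by
    rw [S⁻¹.inv_smul κt hSinvu, S.nonsing_inv_nonsing_inv hSu, invOf_eq_inv]
  constructor
  · intro m V hV
    have hVu : IsUnit V.det := hV.det_pos.ne'.isUnit
    have hVinv : V⁻¹.PosDef := hV.inv
    have hApd : (κh • V⁻¹ + κl • S⁻¹).PosDef :=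
      posDef_add (posDef_smul hVinv hκh) (posDef_smul hSinv hκl)
    have hAu : IsUnit (κh • V⁻¹ + κl • S⁻¹).det := hApd.det_pos.ne'.isUnit
    constructor
    · rintro ⟨hV1, hm1⟩
      set A := κh • V⁻¹ + κl • S⁻¹ with hAdef
      -- A * V = κt • 1
      have hAV : A * V = κt • 1 := by
        rw [hV1, Matrix.mul_smul, A.mul_nonsing_inv hAu]
      have hA_eq : A = κt • V⁻¹ := by
        calc A = A * (V * V⁻¹) := by rw [V.mul_nonsing_inv hVu, Matrix.mul_one]
        _ = (A * V) * V⁻¹ := by rw [Matrix.mul_assoc]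
        _ = κt • V⁻¹ := by rw [hAV, Matrix.smul_mul, Matrix.one_mul]
      have hkey : κl • S⁻¹ = κl • V⁻¹ := by
        have h2 : κh • V⁻¹ + κl • S⁻¹ = κh • V⁻¹ + κl • V⁻¹ := by
          rw [← hAdef, hA_eq, hκt, add_smul, add_comm]
        exact add_left_cancel h2
      have hSV : S⁻¹ = V⁻¹ := smul_right_injective _ hκl.ne' hkey
      have hVS : V = S := by
        rw [← V.nonsing_inv_nonsing_inv hVu, ← hSV, S.nonsing_inv_nonsing_inv hSu]
      refine ⟨?_, hVS⟩
      -- now the mean equation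
      rw [hAdef, hVS, hsum, hinv_sum] at hm1
      have hm2 : m = κt⁻¹ • (κl • μ + κh • m) := by
        conv_lhs => rw [hm1]
        rw [smul_mulVec, mulVec_add]
        simp only [mulVec_smul, Matrix.mulVec_mulVec, Matrix.mul_nonsing_inv _ hSu, one_mulVec]
      have hm3 : κt • m = κl • μ + κh • m := by
        conv_lhs => rw [hm2]
        rw [smul_smul, mul_inv_cancel₀ hκt0.ne', one_smul]
      have hm4 : κl • m = κl • μ := by
        have : κt • m - κh • m = κl • μ := by rw [hm3]; abel
        rw [← this, ← sub_smul, hκt]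
        ring_nf
      exact smul_right_injective _ hκl.ne' hm4
    · rintro ⟨hm, hVS⟩
      subst hm hVS
      rw [hsum, hinv_sum]
      constructor
      · rw [smul_smul, mul_inv_cancel₀ hκt0.ne', one_smul]
      · rw [smul_mulVec, mulVec_add]
        simp only [mulVec_smul, Matrix.mulVec_mulVec, Matrix.mul_nonsing_inv _ hSu, one_mulVec]
        rw [← add_smul, ← hκt, smul_smul,
          inv_mul_cancel₀ hκt0.ne', one_smul]
  · refine ⟨1, one_pos, fun z => ?_⟩
    haveI : Invertible κh⁻¹ := invertibleOfNonzero (inv_ne_zero hκh.ne')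
    have h1 : (κh⁻¹ • S)⁻¹ = κh • S⁻¹ := by
      rw [S.inv_smul κh⁻¹ hSu]
      congr 1
      simp [invOf_eq_inv]
    rw [h1, one_mul]
    congr 1
    rw [smul_mulVec, dotProduct_smul, smul_eq_mul]
    ring
end

section
/- Let Σ ∈ ℝ^{M×M} be symmetric positive definite with smallest eigenvalue e(Σ) and largest eigenvalue λ_max(Σ), let V_0 ∈ ℝ^{M×M}, let κ_l, κ_h, γ, δt > 0, set κ_t = κ_l + κ_h and c = 2 δt κ_l / (γ κ_t), and assume 0 < c < e(Σ). Define the sequence of matrices (V_t)_{t∈ℕ} by the recurrence V_{t+1} = V_t − c (Σ⁻¹ V_t − κ_h⁻¹ I). Then for all t ∈ ℕ: (i) Σ⁻¹ V_t − κ_h⁻¹ I = (I − c Σ⁻¹)^t (Σ⁻¹ V_0 − κ_h⁻¹ I); and (ii) ‖V_t − κ_h⁻¹ Σ‖ ≤ λ_max(Σ) (1 − c/λ_max(Σ))^t ‖Σ⁻¹ V_0 − κ_h⁻¹ I‖, where 0 ≤ 1 − c/λ_max(Σ) < 1 and ‖·‖ denotes the operator norm on ℝ^{M×M}. In particular V_t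 converges to κ_h⁻¹ Σ exponentially fast. -/
open Matrix

lemma opnorm_le_of_eigen {M : ℕ}
    (A : Matrix (Fin M) (Fin M) ℝ)
    (b : OrthonormalBasis (Fin M) ℝ (EuclideanSpace ℝ (Fin M)))
    (μ : Fin M → ℝ) (r : ℝ) (hr : 0 ≤ r)
    (hAb : ∀ j, A *ᵥ ⇑(b j) = μ j • ⇑(b j))
    (hμ : ∀ j, |μ j| ≤ r) :
    ‖Matrix.toEuclideanCLM (𝕜 := ℝ) A‖ ≤ r := by
  apply ContinuousLinearMap.opNorm_le_bound _ hr
  intro v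
  set T := Matrix.toEuclideanCLM (𝕜 := ℝ) A with hT
  have hTb : ∀ j, T (b j) = μ j • b j := by
    intro j
    have h1 := Matrix.toEuclideanCLM_toLp (𝕜 := ℝ) A (⇑(b j))
    have h2 : WithLp.toLp 2 (⇑(b j)) = b j := rfl
    rw [h2] at h1
    rw [h1, hAb j]
    rfl
  set w : EuclideanSpace ℝ (Fin M) :=
    (WithLp.equiv 2 (Fin M → ℝ)).symm (fun j => μ j * b.repr v j) with hw
  have hv : T v = b.repr.symm w := by
    conv_lhs => rw [← b.sum_repr v]
    rw [map_sum, ← b.sum_repr_symm]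
    refine Finset.sum_congr rfl fun j _ => ?_
    rw [T.map_smul, hTb j, smul_smul, mul_comm]
    rfl
  rw [hv]
  rw [LinearIsometryEquiv.norm_map]
  have hnv : ‖v‖ = ‖b.repr v‖ := (LinearIsometryEquiv.norm_map _ _).symm
  rw [hnv]
  rw [EuclideanSpace.norm_eq, EuclideanSpace.norm_eq]
  have key : ∑ i, ‖w i‖ ^ 2 ≤ r ^ 2 * ∑ i, ‖b.repr v i‖ ^ 2 := by
    rw [Finset.mul_sum]
    refine Finset.sum_le_sum fun i _ => ?_
    have : ‖w i‖ = |μ i| * ‖b.repr v i‖ := by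
      simp [hw, abs_mul, Real.norm_eq_abs]
    rw [this, mul_pow]
    have h1 : |μ i| ^ 2 ≤ r ^ 2 := by
      have := hμ i
      nlinarith [abs_nonneg (μ i)]
    nlinarith [sq_nonneg ‖b.repr v i‖, sq_nonneg (|μ i|)]
  calc Real.sqrt (∑ i, ‖w i‖ ^ 2) ≤ Real.sqrt (r ^ 2 * ∑ i, ‖b.repr v i‖ ^ 2) :=
        Real.sqrt_le_sqrt key
    _ = r * Real.sqrt (∑ i, ‖b.repr v i‖ ^ 2) := by
        rw [Real.sqrt_mul (sq_nonneg r), Real.sqrt_sq hr]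

/-- exponential convergence of the second moment of the time-discretized
consensus-based sampling dynamics with quadratic loss. Here `e = ⨅ i, eigenvalues i`
and `lmax = ⨆ i, eigenvalues i` are the smallest and largest eigenvalues of `Σ`,
and `‖·‖` is the operator norm on matrices, expressed via the norm of the associated
continuous linear map on Euclidean space (`Matrix.toEuclideanCLM`). -/
theorem stmt_12 {M : ℕ}
    (S : Matrix (Fin M) (Fin M) ℝ) (hS : S.PosDef)
    (V0 : Matrix (Fin M) (Fin M) ℝ)
    (κl κh γ δt : ℝ) (hκl : 0 < κl) (hκh : 0 < κh) (hγ : 0 < γ) (hδt : 0 < δt)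
    (κt c : ℝ) (hκt : κt = κl + κh) (hcdef : c = 2 * δt * κl / (γ * κt))
    (e lmax : ℝ) (he : e = ⨅ i, hS.1.eigenvalues i)
    (hlmax : lmax = ⨆ i, hS.1.eigenvalues i)
    (hc0 : 0 < c) (hce : c < e)
    (V : ℕ → Matrix (Fin M) (Fin M) ℝ) (hV0 : V 0 = V0)
    (hrec : ∀ t : ℕ, V (t + 1) = V t - c • (S⁻¹ * V t - κh⁻¹ • (1 : Matrix (Fin M) (Fin M) ℝ))) :
    ∀ t : ℕ,
      S⁻¹ * V t - κh⁻¹ • (1 : Matrix (Fin M) (Fin M) ℝ) =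
        (1 - c • S⁻¹) ^ t * (S⁻¹ * V0 - κh⁻¹ • (1 : Matrix (Fin M) (Fin M) ℝ)) ∧
      ‖Matrix.toEuclideanCLM (𝕜 := ℝ) (V t - κh⁻¹ • S)‖ ≤
        lmax * (1 - c / lmax) ^ t *
          ‖Matrix.toEuclideanCLM (𝕜 := ℝ) (S⁻¹ * V0 - κh⁻¹ • (1 : Matrix (Fin M) (Fin M) ℝ))‖ ∧
      0 ≤ 1 - c / lmax ∧ 1 - c / lmax < 1 := by
    -- rule out M = 0
  rcases Nat.eq_zero_or_pos M with hM | hM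
  · exfalso
    subst hM
    have : e = 0 := by
      rw [he]
      exact Real.iInf_of_isEmpty _
    linarith
  have : NeZero M := ⟨hM.ne'⟩
  -- basic eigenvalue facts
  set μ : Fin M → ℝ := hS.1.eigenvalues with hμdef
  have hμpos : ∀ i, 0 < μ i := fun i => hS.eigenvalues_pos i
  have hbdd : BddAbove (Set.range μ) := Set.Finite.bddAbove (Set.finite_range μ)
  have hbddb : BddBelow (Set.range μ) := Set.Finite.bddBelow (Set.finite_range μ)
  have hμle : ∀ i, μ i ≤ lmax := fun i => hlmax ▸ le_ciSup hbdd i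
  have heμ : ∀ i, e ≤ μ i := fun i => he ▸ ciInf_le hbddb i
  obtain ⟨i0⟩ := Fin.pos_iff_nonempty.mp hM
  have hclmax : c < lmax := lt_of_lt_of_le (lt_of_lt_of_le hce (heμ i0)) (hμle i0)
  have hlmax0 : 0 < lmax := lt_trans hc0 hclmax
  have hfac0 : 0 ≤ 1 - c / lmax := by
    have : c / lmax < 1 := (div_lt_one hlmax0).mpr hclmax
    linarith
  have hfac1 : 1 - c / lmax < 1 := by
    have : 0 < c / lmax := div_pos hc0 hlmax0
    linarith
  -- invertibility
  have hdet : IsUnit S.det := isUnit_iff_ne_zero.mpr hS.det_pos.ne'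
  have hSinvS : S⁻¹ * S = 1 := Matrix.nonsing_inv_mul S hdet
  have hSSinv : S * S⁻¹ = 1 := Matrix.mul_nonsing_inv S hdet
  -- eigenvector basis
  set b := hS.1.eigenvectorBasis with hb
  have hSb : ∀ j, S *ᵥ ⇑(b j) = μ j • ⇑(b j) := fun j => hS.1.mulVec_eigenvectorBasis j
  have hSinvb : ∀ j, S⁻¹ *ᵥ ⇑(b j) = (μ j)⁻¹ • ⇑(b j) := by
    intro j
    have h1 : S⁻¹ *ᵥ (S *ᵥ ⇑(b j)) = ⇑(b j) := by
      rw [Matrix.mulVec_mulVec, hSinvS, Matrix.one_mulVec]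
    rw [hSb j, Matrix.mulVec_smul] at h1
    calc S⁻¹ *ᵥ ⇑(b j) = (μ j)⁻¹ • (μ j • (S⁻¹ *ᵥ ⇑(b j))) := by
          rw [smul_smul, inv_mul_cancel₀ (hμpos j).ne', one_smul]
      _ = (μ j)⁻¹ • ⇑(b j) := by rw [h1]
  have hBb : ∀ j, (1 - c • S⁻¹) *ᵥ ⇑(b j) = (1 - c * (μ j)⁻¹) • ⇑(b j) := by
    intro j
    rw [Matrix.sub_mulVec, Matrix.one_mulVec, Matrix.smul_mulVec, hSinvb j,
      sub_smul, one_smul, smul_smul]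
  -- norm bounds
  have hnS : ‖Matrix.toEuclideanCLM (𝕜 := ℝ) S‖ ≤ lmax :=
    opnorm_le_of_eigen S b μ lmax hlmax0.le hSb
      (fun j => by rw [abs_of_pos (hμpos j)]; exact hμle j)
  have hnB : ‖Matrix.toEuclideanCLM (𝕜 := ℝ) ((1 : Matrix (Fin M) (Fin M) ℝ) - c • S⁻¹)‖ ≤ 1 - c / lmax := by
    refine opnorm_le_of_eigen _ b (fun j => 1 - c * (μ j)⁻¹) _ hfac0 hBb fun j => ?_
    have h1 : c * (μ j)⁻¹ ≤ 1 := by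
      rw [← div_eq_mul_inv, div_le_one (hμpos j)]
      exact le_trans hce.le (heμ j)
    have h2 : c / lmax ≤ c * (μ j)⁻¹ := by
      rw [← div_eq_mul_inv]
      exact div_le_div_of_nonneg_left hc0.le (hμpos j) (hμle j)
    rw [abs_of_nonneg (by linarith)]
    linarith
  -- part (i) by induction
  have hE : ∀ t : ℕ,
      S⁻¹ * V t - κh⁻¹ • (1 : Matrix (Fin M) (Fin M) ℝ) =
        (1 - c • S⁻¹) ^ t * (S⁻¹ * V0 - κh⁻¹ • (1 : Matrix (Fin M) (Fin M) ℝ)) := by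
    intro t
    induction t with
    | zero => rw [hV0, pow_zero, one_mul]
    | succ t ih =>
      rw [hrec t, pow_succ']
      have expand : S⁻¹ * (V t - c • (S⁻¹ * V t - κh⁻¹ • (1 : Matrix (Fin M) (Fin M) ℝ)))
            - κh⁻¹ • (1 : Matrix (Fin M) (Fin M) ℝ)
          = (1 - c • S⁻¹) * (S⁻¹ * V t - κh⁻¹ • (1 : Matrix (Fin M) (Fin M) ℝ)) := by
        rw [Matrix.mul_sub, Matrix.mul_smul, Matrix.mul_sub, Matrix.mul_smul, Matrix.mul_one,
          Matrix.sub_mul, Matrix.one_mul, Matrix.smul_mul, Matrix.mul_sub, Matrix.mul_smul,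
          Matrix.mul_one]
        abel
      rw [expand, ih, ← mul_assoc]
  intro t
  refine ⟨hE t, ?_, hfac0, hfac1⟩
  -- part (ii)
  have hfact : V t - κh⁻¹ • S = S * ((S⁻¹ * V t) - κh⁻¹ • (1 : Matrix (Fin M) (Fin M) ℝ)) := by
    rw [Matrix.mul_sub, Matrix.mul_smul, Matrix.mul_one, ← mul_assoc, hSSinv, one_mul]
  rw [hfact, hE t, ← mul_assoc]
  set E0 := S⁻¹ * V0 - κh⁻¹ • (1 : Matrix (Fin M) (Fin M) ℝ) with hE0
  rw [_root_.map_mul, _root_.map_mul, map_pow]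
  have hnE0 : (0 : ℝ) ≤ ‖Matrix.toEuclideanCLM (𝕜 := ℝ) E0‖ := norm_nonneg _
  calc ‖Matrix.toEuclideanCLM (𝕜 := ℝ) S * Matrix.toEuclideanCLM (𝕜 := ℝ) ((1 : Matrix (Fin M) (Fin M) ℝ) - c • S⁻¹) ^ t *
        Matrix.toEuclideanCLM (𝕜 := ℝ) E0‖
      ≤ ‖Matrix.toEuclideanCLM (𝕜 := ℝ) S * Matrix.toEuclideanCLM (𝕜 := ℝ) ((1 : Matrix (Fin M) (Fin M) ℝ) - c • S⁻¹) ^ t‖ *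
        ‖Matrix.toEuclideanCLM (𝕜 := ℝ) E0‖ := norm_mul_le _ _
    _ ≤ (‖Matrix.toEuclideanCLM (𝕜 := ℝ) S‖ * ‖Matrix.toEuclideanCLM (𝕜 := ℝ) ((1 : Matrix (Fin M) (Fin M) ℝ) - c • S⁻¹) ^ t‖) *
        ‖Matrix.toEuclideanCLM (𝕜 := ℝ) E0‖ := by
        gcongr
        exact norm_mul_le _ _
    _ ≤ (lmax * (1 - c / lmax) ^ t) * ‖Matrix.toEuclideanCLM (𝕜 := ℝ) E0‖ := by
        refine mul_le_mul_of_nonneg_right ?_ hnE0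
        refine mul_le_mul hnS ?_ (norm_nonneg _) hlmax0.le
        have hpow : ∀ n : ℕ, ‖Matrix.toEuclideanCLM (𝕜 := ℝ) ((1 : Matrix (Fin M) (Fin M) ℝ) - c • S⁻¹) ^ n‖ ≤ ‖Matrix.toEuclideanCLM (𝕜 := ℝ) ((1 : Matrix (Fin M) (Fin M) ℝ) - c • S⁻¹)‖ ^ n := by
          intro n
          induction n with
          | zero =>
            simp only [pow_zero]
            exact ContinuousLinearMap.norm_id_le
          | succ n ih =>
            rw [pow_succ, pow_succ]
            exact (norm_mul_le _ _).trans (mul_le_mul_of_nonneg_right ih (norm_nonneg _))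
        exact (hpow t).trans (pow_le_pow_left₀ (norm_nonneg _) hnB t)
end
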